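/- Under the Ehrenfeucht–Mostowski hypotheses, if ā = (a₁,…,aₙ) and b̄ = (b₁,…,bₙ) are n-tuples from U that are atomically equivalent in ⟨U,≤⟩ (i.e., aᵢ ≤ aⱼ if and only if bᵢ ≤ bⱼ for all i, j ≤ n), then ā and b̄ satisfy the same L-formulas in the L-structure Sg^M(K*U). -/

import Mathlib

open FirstOrder Language Cardinal

/-- `K*V`: the set `V` together with all values of terms from `K` at tuples from `V`. -/
def KStarSet {L' : FirstOrder.Language} {M : Type*} [L'.Structure M]
    (K : Set (Σ n, L'.Term (Fin n))) (V : Set M) : Set M :=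
  V ∪ {x | ∃ t ∈ K, ∃ v : Fin t.1 → ↥V, x = t.2.realize fun i => (v i : M)}

section OrderExt

variable {α : Type*} [LinearOrder α] [DenselyOrdered α] [NoMinOrder α] [NoMaxOrder α]
  [Nonempty α]

/-- one-point extension of a finite order-equivalence -/
lemma EM.ext_one {γ : Type*} [Fintype γ] (u v : γ → α)
    (huv : ∀ i j, u i ≤ u j ↔ v i ≤ v j) (p : α) :
    ∃ q : α, ∀ i, (u i ≤ p ↔ v i ≤ q) ∧ (p ≤ u i ↔ q ≤ v i) := by
  classical
  have hlt : ∀ i j, u i < u j ↔ v i < v j := by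
    intro i j
    rw [lt_iff_not_ge, lt_iff_not_ge, huv j i]
  by_cases he : ∃ i, u i = p
  · obtain ⟨i0, hi0⟩ := he
    subst hi0
    exact ⟨v i0, fun i => ⟨huv i i0, huv i0 i⟩⟩
  · push_neg at he
    set S := Finset.univ.filter (fun i => u i < p) with hSdef
    set T := Finset.univ.filter (fun i => p < u i) with hTdef
    have hmem : ∀ i, i ∈ S ∨ i ∈ T := by
      intro i
      rcases lt_trichotomy (u i) p with h | h | h
      · exact Or.inl (Finset.mem_filter.mpr ⟨Finset.mem_univ _, h⟩)
      · exact absurd h (he i)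
      · exact Or.inr (Finset.mem_filter.mpr ⟨Finset.mem_univ _, h⟩)
    by_cases hS : S.Nonempty
    · by_cases hT : T.Nonempty
      · obtain ⟨i0, hi0S, hi0⟩ := S.exists_max_image u hS
        obtain ⟨j0, hj0T, hj0⟩ := T.exists_min_image u hT
        have h1 : u i0 < p := (Finset.mem_filter.mp hi0S).2
        have h2 : p < u j0 := (Finset.mem_filter.mp hj0T).2
        obtain ⟨q, hq1, hq2⟩ := exists_between ((hlt i0 j0).mp (h1.trans h2))
        refine ⟨q, fun i => ⟨⟨?_, ?_⟩, ?_, ?_⟩⟩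
        · intro h
          have hiS : i ∈ S := Finset.mem_filter.mpr ⟨Finset.mem_univ _,
            lt_of_le_of_ne h (he i)⟩
          exact ((huv i i0).mp (hi0 i hiS)).trans hq1.le
        · intro h
          by_contra hc
          have hiT : i ∈ T := Finset.mem_filter.mpr ⟨Finset.mem_univ _, lt_of_not_ge hc⟩
          exact absurd (((huv j0 i).mp (hj0 i hiT)).trans h) (not_le.mpr hq2)
        · intro h
          have hiT : i ∈ T := Finset.mem_filter.mpr ⟨Finset.mem_univ _,
            lt_of_le_of_ne h fun hh => he i hh.symm⟩
          exact hq2.le.trans ((huv j0 i).mp (hj0 i hiT))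
        · intro h
          by_contra hc
          have hiS : i ∈ S := Finset.mem_filter.mpr ⟨Finset.mem_univ _, lt_of_not_ge hc⟩
          exact absurd (h.trans ((huv i i0).mp (hi0 i hiS))) (not_le.mpr hq1)
      · haveI : Nonempty γ := ⟨hS.choose⟩
        obtain ⟨m, -, hm⟩ := Finset.univ.exists_max_image v Finset.univ_nonempty
        obtain ⟨q, hq⟩ := exists_gt (v m)
        refine ⟨q, fun i => ?_⟩
        have hui : u i < p := by
          rcases hmem i with h | h
          · exact (Finset.mem_filter.mp h).2
          · exact absurd ⟨i, h⟩ hT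
        have hvi : v i < q := (hm i (Finset.mem_univ _)).trans_lt hq
        exact ⟨⟨fun _ => hvi.le, fun _ => hui.le⟩,
          iff_of_false (not_le.mpr hui) (not_le.mpr hvi)⟩
    · by_cases hT : T.Nonempty
      · haveI : Nonempty γ := ⟨hT.choose⟩
        obtain ⟨m, -, hm⟩ := Finset.univ.exists_min_image v Finset.univ_nonempty
        obtain ⟨q, hq⟩ := exists_lt (v m)
        refine ⟨q, fun i => ?_⟩
        have hui : p < u i := by
          rcases hmem i with h | h
          · exact absurd ⟨i, h⟩ hS
          · exact (Finset.mem_filter.mp h).2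
        have hvi : q < v i := hq.trans_le (hm i (Finset.mem_univ _))
        exact ⟨iff_of_false (not_le.mpr hui) (not_le.mpr hvi),
          ⟨fun _ => hvi.le, fun _ => hui.le⟩⟩
      · exact ⟨Classical.arbitrary α, fun i =>
          ((hmem i).elim (fun h => absurd ⟨i, h⟩ hS) (fun h => absurd ⟨i, h⟩ hT))⟩

lemma EM.ext_fin : ∀ (r : ℕ) {γ : Type*} [Fintype γ] (u v : γ → α),
    (∀ i j, u i ≤ u j ↔ v i ≤ v j) → ∀ (p : Fin r → α), ∃ q : Fin r → α,
      ∀ i j : γ ⊕ Fin r,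
        Sum.elim u p i ≤ Sum.elim u p j ↔ Sum.elim v q i ≤ Sum.elim v q j := by
  intro r
  induction r with
  | zero =>
    intro γ _ u v huv p
    exact ⟨Fin.elim0, by rintro (i | i) (j | j) <;>
      first | exact huv i j | exact i.elim0 | exact j.elim0⟩
  | succ r ih =>
    intro γ _ u v huv p
    obtain ⟨q0, hq0⟩ := EM.ext_one u v huv (p 0)
    set u' : Option γ → α := fun o => Option.elim o (p 0) u with hu'def
    set v' : Option γ → α := fun o => Option.elim o q0 v with hv'def
    have huv' : ∀ i j : Option γ, u' i ≤ u' j ↔ v' i ≤ v' j := by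
      rintro (_ | i) (_ | j)
      · simp
      · exact (hq0 j).2
      · exact (hq0 i).1
      · exact huv i j
    obtain ⟨q', hq'⟩ := ih u' v' huv' (fun j => p j.succ)
    refine ⟨Fin.cons q0 q', ?_⟩
    set e : γ ⊕ Fin (r + 1) → Option γ ⊕ Fin r := fun x =>
      x.elim (fun g => Sum.inl (some g))
        (fun j => Fin.cases (Sum.inl none) (fun j' => Sum.inr j') j) with hedef
    have hu : ∀ x, Sum.elim u p x = Sum.elim u' (fun j => p j.succ) (e x) := by
      rintro (g | j)
      · rfl
      · refine Fin.cases ?_ (fun j' => ?_) j <;> simp [hedef, hu'def]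
    have hv : ∀ x, Sum.elim v (Fin.cons q0 q') x = Sum.elim v' q' (e x) := by
      rintro (g | j)
      · rfl
      · refine Fin.cases ?_ (fun j' => ?_) j <;> simp [hedef, hv'def]
    intro i j
    rw [hu i, hu j, hv i, hv j]
    exact hq' (e i) (e j)

lemma EM.ext_fintype {γ : Type*} [Fintype γ] {δ : Type*} [Fintype δ] (u v : γ → α)
    (huv : ∀ i j, u i ≤ u j ↔ v i ≤ v j) (p : δ → α) :
    ∃ q : δ → α, ∀ i j : γ ⊕ δ,
      Sum.elim u p i ≤ Sum.elim u p j ↔ Sum.elim v q i ≤ Sum.elim v q j := by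
  classical
  let e := Fintype.equivFin δ
  obtain ⟨q', hq'⟩ := EM.ext_fin (Fintype.card δ) u v huv (p ∘ e.symm)
  refine ⟨q' ∘ e, ?_⟩
  have h1 : ∀ x : γ ⊕ δ, Sum.elim u p x = Sum.elim u (p ∘ e.symm) (Sum.map id e x) := by
    rintro (g | d)
    · rfl
    · simp
  have h2 : ∀ x : γ ⊕ δ, Sum.elim v (q' ∘ e) x = Sum.elim v q' (Sum.map id e x) := by
    rintro (g | d) <;> rfl
  intro i j
  rw [h1 i, h1 j, h2 i, h2 j]
  exact hq' _ _

end OrderExt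

section Good

variable {L L' : FirstOrder.Language} (φL : L →ᴸ L')
  (K : Set (Σ n, L'.Term (Fin n)))

/-- Terms (over arbitrary variable type) built from variables, `K`-terms with variables
substituted, and `L`-function symbols. -/
inductive EM.GoodTerm : {γ : Type} → L'.Term γ → Prop
  | var {γ : Type} (i : γ) : EM.GoodTerm (Term.var i)
  | kterm {γ : Type} (t : Σ n, L'.Term (Fin n)) (ht : t ∈ K) (f : Fin t.1 → γ) :
      EM.GoodTerm (t.2.relabel f)
  | func {γ : Type} {l : ℕ} (f : L.Functions l) (ts : Fin l → L'.Term γ)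
      (h : ∀ i, EM.GoodTerm (ts i)) : EM.GoodTerm (Term.func (φL.onFunction f) ts)

lemma EM.GoodTerm.relabel {γ δ : Type} {g : L'.Term γ} (h : EM.GoodTerm φL K g)
    (ρ : γ → δ) : EM.GoodTerm φL K (g.relabel ρ) := by
  induction h with
  | var i => exact EM.GoodTerm.var (ρ i)
  | kterm t ht f =>
    rw [Term.relabel_relabel]
    exact EM.GoodTerm.kterm t ht (ρ ∘ f)
  | func f ts h ih => exact EM.GoodTerm.func f _ ih

variable {M : Type*} [L.Structure M] [L'.Structure M] [φL.IsExpansionOn M] (U : Set M)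

lemma EM.GoodTerm.realize_mem {γ : Type} {g : L'.Term γ} (hg : EM.GoodTerm φL K g)
    (w : γ → ↥U) :
    g.realize (fun i => ((w i : M))) ∈ Substructure.closure L (KStarSet K U) := by
  induction hg with
  | var i =>
    exact Substructure.subset_closure (Set.mem_union_left _ (w i).2)
  | kterm t ht f =>
    apply Substructure.subset_closure
    right
    exact ⟨t, ht, w ∘ f, by simp [Term.realize_relabel, Function.comp_def]⟩
  | func f ts h ih =>
    simp only [Term.realize_func, LHom.map_onFunction]
    exact (Substructure.closure L (KStarSet K U)).fun_mem f _ ih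

lemma EM.exists_goodTerm {x : M} (hx : x ∈ Substructure.closure L (KStarSet K U)) :
    ∃ (γ : Type) (_ : Fintype γ) (g : L'.Term γ) (p : γ → ↥U),
      EM.GoodTerm φL K g ∧ x = g.realize (fun i => (p i : M)) := by
  set P : M → Prop := fun x => ∃ (γ : Type) (_ : Fintype γ) (g : L'.Term γ) (p : γ → ↥U),
      EM.GoodTerm φL K g ∧ x = g.realize (fun i => (p i : M)) with hP
  have base : ∀ y ∈ KStarSet K U, P y := by
    rintro y (hU | ⟨t, ht, vv, rfl⟩)
    · exact ⟨PUnit, inferInstance, Term.var PUnit.unit, fun _ => ⟨y, hU⟩,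
        EM.GoodTerm.var _, by simp⟩
    · exact ⟨Fin t.1, inferInstance, t.2.relabel id, vv, EM.GoodTerm.kterm t ht id,
        by simp [Term.realize_relabel, Function.comp_def]⟩
  have fn : ∀ {l : ℕ} (f : L.Functions l), FirstOrder.Language.ClosedUnder f (setOf P) := by
    intro l f xs hxs
    choose γ inst g p hg hx using hxs
    haveI : ∀ i, Fintype (γ i) := inst
    refine ⟨Σ i, γ i, inferInstance, Term.func (φL.onFunction f)
      (fun i => (g i).relabel (Sigma.mk i)), fun s => p s.1 s.2,
      EM.GoodTerm.func f _ (fun i => (hg i).relabel φL K _), ?_⟩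
    simp only [Term.realize_func, LHom.map_onFunction, Term.realize_relabel]
    congr 1
    funext i
    rw [hx i]
    rfl
  exact Substructure.closure_induction hx base fn

end Good

section Indisc

variable {L' : FirstOrder.Language} {M : Type*} [L'.Structure M]
  {U : Set M} [LinearOrder ↥U]

lemma EM.indisc_fintype
    (hInd : ∀ (n : ℕ) (ψ : L'.Formula (Fin n)) (a b : Fin n → ↥U),
      StrictMono a → StrictMono b →
      (ψ.Realize (fun i => (a i : M)) ↔ ψ.Realize fun i => (b i : M)))
    {γ : Type} [Fintype γ] (θ : L'.Formula γ) (u v : γ → ↥U)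
    (huv : ∀ i j, u i ≤ u j ↔ v i ≤ v j) :
    θ.Realize (fun i => (u i : M)) ↔ θ.Realize (fun i => (v i : M)) := by
  classical
  have hlt : ∀ i j, u i < u j ↔ v i < v j := by
    intro i j
    rw [lt_iff_not_ge, lt_iff_not_ge, huv j i]
  set s : Finset ↥U := Finset.univ.image u with hs
  set e := s.orderIsoOfFin rfl with he
  have hmem : ∀ j : Fin s.card, ∃ i, u i = ((e j : ↥s) : ↥U) := by
    intro j
    have h2 : (e j : ↥U) ∈ Finset.image u Finset.univ := (e j).2
    obtain ⟨i, -, hi⟩ := Finset.mem_image.mp h2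
    exact ⟨i, hi⟩
  set f : Fin s.card → γ := fun j => (hmem j).choose with hf
  have hfe : ∀ j, u (f j) = e j := fun j => (hmem j).choose_spec
  set σ : γ → Fin s.card := fun i => e.symm ⟨u i, by
    rw [hs]; exact Finset.mem_image_of_mem u (Finset.mem_univ i)⟩ with hσ
  have hσu : ∀ i, u (f (σ i)) = u i := by
    intro i
    rw [hfe]
    exact congrArg Subtype.val (e.apply_symm_apply _)
  have hσv : ∀ i, v (f (σ i)) = v i := by
    intro i
    have h1 := (hσu i).le
    have h2 := (hσu i).ge
    exact le_antisymm ((huv _ _).mp h1) ((huv _ _).mp h2)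
  have hum : StrictMono (u ∘ f) := by
    intro j j' h
    show u (f j) < u (f j')
    rw [hfe j, hfe j']
    exact Subtype.coe_lt_coe.mpr (e.strictMono h)
  have hvm : StrictMono (v ∘ f) := fun j j' h => (hlt _ _).mp (hum h)
  have key : ∀ (w : γ → ↥U), (∀ i, w (f (σ i)) = w i) →
      (θ.Realize (fun i => (w i : M)) ↔
        (θ.relabel σ).Realize (fun j => ((w ∘ f) j : M))) := by
    intro w hw
    rw [Formula.realize_relabel]
    apply iff_of_eq
    congr 1
    funext i
    simp [Function.comp_def, hw i]
  rw [key u hσu, key v hσv]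
  exact hInd s.card (θ.relabel σ) (u ∘ f) (v ∘ f) hum hvm

end Indisc

section Main

open FirstOrder.Language.Structure

variable {L L' : FirstOrder.Language} (φL : L →ᴸ L') {M : Type*}
    [L.Structure M] [L'.Structure M] [φL.IsExpansionOn M]
    (K : Set (Σ n, L'.Term (Fin n)))
    (U : Set M) [LinearOrder ↥U] [DenselyOrdered ↥U] [NoMinOrder ↥U] [NoMaxOrder ↥U]

omit [L'.Structure M] [φL.IsExpansionOn M] [LinearOrder ↥U] [DenselyOrdered ↥U]
  [NoMinOrder ↥U] [NoMaxOrder ↥U] in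
lemma EM.coe_realize_sub {S : L.Substructure M} {β : Type*} (t : L.Term β)
    (xs : β → S) :
    ((t.realize xs : S) : M) = t.realize (fun i => (xs i : M)) := by
  simpa [Function.comp_def] using
    (HomClass.realize_term S.subtype (t := t) (v := xs)).symm

omit [L'.Structure M] [φL.IsExpansionOn M] [LinearOrder ↥U] [DenselyOrdered ↥U]
  [NoMinOrder ↥U] [NoMaxOrder ↥U] in
lemma EM.realize_equal_sub {S : L.Substructure M} {β : Type*} {k : ℕ}
    (t₁ t₂ : L.Term (β ⊕ Fin k)) (x : β → S) (y : Fin k → S) :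
    BoundedFormula.Realize (M := S) (BoundedFormula.equal t₁ t₂) x y ↔
      t₁.realize (fun s => ((Sum.elim x y s : S) : M)) =
        t₂.realize (fun s => ((Sum.elim x y s : S) : M)) := by
  show (Term.realize (Sum.elim x y) t₁ = Term.realize (Sum.elim x y) t₂) ↔ _
  rw [Subtype.ext_iff, EM.coe_realize_sub, EM.coe_realize_sub]

omit [L'.Structure M] [φL.IsExpansionOn M] [LinearOrder ↥U] [DenselyOrdered ↥U]
  [NoMinOrder ↥U] [NoMaxOrder ↥U] in
lemma EM.realize_rel_sub {S : L.Substructure M} {β : Type*} {k l : ℕ}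
    (R : L.Relations l) (ts : Fin l → L.Term (β ⊕ Fin k)) (x : β → S) (y : Fin k → S) :
    BoundedFormula.Realize (M := S) (BoundedFormula.rel R ts) x y ↔
      Structure.RelMap (M := M) R
        (fun i => (ts i).realize (fun s => ((Sum.elim x y s : S) : M))) := by
  show Structure.RelMap (M := M) R
    (fun i => ((Term.realize (Sum.elim x y) (ts i) : S) : M)) ↔ _
  apply iff_of_eq
  congr 1
  funext i
  rw [EM.coe_realize_sub]

lemma EM.mainB (hUne : U.Nonempty)
    (hInd : ∀ (n : ℕ) (ψ : L'.Formula (Fin n)) (a b : Fin n → ↥U),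
      StrictMono a → StrictMono b →
      (ψ.Realize (fun i => (a i : M)) ↔ ψ.Realize fun i => (b i : M)))
    {α : Type*} :
    ∀ {k : ℕ} (φ : L.BoundedFormula α k) {γ : Type} [Fintype γ]
      (c : α ⊕ Fin k → L'.Term γ) (hc : ∀ i, EM.GoodTerm φL K (c i))
      (u v : γ → ↥U) (huv : ∀ i j, u i ≤ u j ↔ v i ≤ v j),
      (BoundedFormula.Realize (M := ↥(Substructure.closure L (KStarSet K U))) φ
        (fun i => ⟨(c (Sum.inl i)).realize (fun s => (u s : M)),
          EM.GoodTerm.realize_mem φL K U (hc (Sum.inl i)) u⟩)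
        (fun j => ⟨(c (Sum.inr j)).realize (fun s => (u s : M)),
          EM.GoodTerm.realize_mem φL K U (hc (Sum.inr j)) u⟩) ↔
      BoundedFormula.Realize (M := ↥(Substructure.closure L (KStarSet K U))) φ
        (fun i => ⟨(c (Sum.inl i)).realize (fun s => (v s : M)),
          EM.GoodTerm.realize_mem φL K U (hc (Sum.inl i)) v⟩)
        (fun j => ⟨(c (Sum.inr j)).realize (fun s => (v s : M)),
          EM.GoodTerm.realize_mem φL K U (hc (Sum.inr j)) v⟩)) := by
  haveI : Nonempty ↥U := ⟨⟨hUne.choose, hUne.choose_spec⟩⟩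
  intro k φ
  induction φ with
  | falsum =>
    intro γ _ c hc u v huv
    exact Iff.rfl
  | @equal k t₁ t₂ =>
    intro γ _ c hc u v huv
    have hside : ∀ (w : γ → ↥U),
        (BoundedFormula.Realize (M := ↥(Substructure.closure L (KStarSet K U)))
          (BoundedFormula.equal t₁ t₂)
          (fun i => ⟨(c (Sum.inl i)).realize (fun s => (w s : M)),
            EM.GoodTerm.realize_mem φL K U (hc (Sum.inl i)) w⟩)
          (fun j => ⟨(c (Sum.inr j)).realize (fun s => (w s : M)),
            EM.GoodTerm.realize_mem φL K U (hc (Sum.inr j)) w⟩) ↔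
        (Term.equal ((φL.onTerm t₁).subst c) ((φL.onTerm t₂).subst c)).Realize
          (fun s => ((w s : ↥U) : M))) := by
      intro w
      rw [EM.realize_equal_sub, Formula.realize_equal,
        Term.realize_subst, Term.realize_subst, LHom.realize_onTerm, LHom.realize_onTerm]
      refine iff_of_eq (congrArg₂ (fun x y : M => x = y) ?_ ?_) <;>
      · refine congrArg (fun f => Term.realize (M := M) f _) (funext fun s => ?_)
        rcases s with s | s <;> rfl
    refine (hside u).trans (Iff.trans ?_ (hside v).symm)
    exact EM.indisc_fintype hInd _ u v huv
  | @rel k l R ts =>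
    intro γ _ c hc u v huv
    have hside : ∀ (w : γ → ↥U),
        (BoundedFormula.Realize (M := ↥(Substructure.closure L (KStarSet K U)))
          (BoundedFormula.rel R ts)
          (fun i => ⟨(c (Sum.inl i)).realize (fun s => (w s : M)),
            EM.GoodTerm.realize_mem φL K U (hc (Sum.inl i)) w⟩)
          (fun j => ⟨(c (Sum.inr j)).realize (fun s => (w s : M)),
            EM.GoodTerm.realize_mem φL K U (hc (Sum.inr j)) w⟩) ↔
        (Relations.formula (φL.onRelation R)
          (fun i => (φL.onTerm (ts i)).subst c)).Realize (fun s => ((w s : ↥U) : M))) := by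
      intro w
      rw [EM.realize_rel_sub, Formula.realize_rel, LHom.map_onRelation]
      refine iff_of_eq (congrArg (Structure.RelMap (M := M) R) (funext fun i => ?_))
      rw [Term.realize_subst, LHom.realize_onTerm]
      refine congrArg (fun f => Term.realize (M := M) f _) (funext fun s => ?_)
      rcases s with s | s <;> rfl
    refine (hside u).trans (Iff.trans ?_ (hside v).symm)
    exact EM.indisc_fintype hInd _ u v huv
  | @imp k f₁ f₂ ih₁ ih₂ =>
    intro γ _ c hc u v huv
    simp only [BoundedFormula.realize_imp]
    rw [ih₁ c hc u v huv, ih₂ c hc u v huv]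
  | @all k θ ih =>
    intro γ instγ c hc u v huv
    suffices H : ∀ {γ' : Type} [Fintype γ'] (c' : α ⊕ Fin k → L'.Term γ')
        (hc' : ∀ i, EM.GoodTerm φL K (c' i)) (u' v' : γ' → ↥U)
        (_ : ∀ i j, u' i ≤ u' j ↔ v' i ≤ v' j),
        BoundedFormula.Realize (M := ↥(Substructure.closure L (KStarSet K U))) θ.all
          (fun i => ⟨(c' (Sum.inl i)).realize (fun s => (u' s : M)),
            EM.GoodTerm.realize_mem φL K U (hc' (Sum.inl i)) u'⟩)
          (fun j => ⟨(c' (Sum.inr j)).realize (fun s => (u' s : M)),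
            EM.GoodTerm.realize_mem φL K U (hc' (Sum.inr j)) u'⟩) →
        BoundedFormula.Realize (M := ↥(Substructure.closure L (KStarSet K U))) θ.all
          (fun i => ⟨(c' (Sum.inl i)).realize (fun s => (v' s : M)),
            EM.GoodTerm.realize_mem φL K U (hc' (Sum.inl i)) v'⟩)
          (fun j => ⟨(c' (Sum.inr j)).realize (fun s => (v' s : M)),
            EM.GoodTerm.realize_mem φL K U (hc' (Sum.inr j)) v'⟩) by
      exact ⟨H c hc u v huv, H c hc v u (fun i j => (huv i j).symm)⟩
    intro γ' instγ' c' hc' u' v' huv' h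
    rw [BoundedFormula.realize_all] at h ⊢
    intro z
    obtain ⟨δ, instδ, g, p, hg, hz⟩ := EM.exists_goodTerm φL K U z.2
    obtain ⟨q, hq⟩ := EM.ext_fintype v' u' (fun i j => (huv' i j).symm) p
    set c'' : α ⊕ Fin (k + 1) → L'.Term (γ' ⊕ δ) := fun i =>
      Sum.rec (fun a => (c' (Sum.inl a)).relabel Sum.inl)
        (fun j => Fin.lastCases (g.relabel Sum.inr)
          (fun j' => (c' (Sum.inr j')).relabel Sum.inl) j) i with hc''def
    have hinl : ∀ a, c'' (Sum.inl a) = (c' (Sum.inl a)).relabel Sum.inl := fun a => rfl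
    have hlast : c'' (Sum.inr (Fin.last k)) = g.relabel Sum.inr := by
      simp [hc''def]
    have hcast : ∀ j' : Fin k, c'' (Sum.inr j'.castSucc) =
        (c' (Sum.inr j')).relabel Sum.inl := by
      intro j'
      simp [hc''def]
    have hc'' : ∀ i, EM.GoodTerm φL K (c'' i) := by
      rintro (a | j)
      · exact (hc' _).relabel φL K _
      · refine Fin.lastCases ?_ (fun j' => ?_) j
        · rw [hlast]; exact hg.relabel φL K _
        · rw [hcast]; exact (hc' _).relabel φL K _
    have key := ih c'' hc'' (Sum.elim u' q) (Sum.elim v' p) (fun i j => (hq i j).symm)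
    set zu : ↥(Substructure.closure L (KStarSet K U)) :=
      ⟨g.realize (fun s => (q s : M)), EM.GoodTerm.realize_mem φL K U hg q⟩ with hzu
    have efree : ∀ (w : γ' → ↥U) (w2 : δ → ↥U),
        (fun i => (⟨(c'' (Sum.inl i)).realize (fun s => ((Sum.elim w w2) s : M)),
          EM.GoodTerm.realize_mem φL K U (hc'' (Sum.inl i)) (Sum.elim w w2)⟩ :
            ↥(Substructure.closure L (KStarSet K U)))) =
        fun i => ⟨(c' (Sum.inl i)).realize (fun s => (w s : M)),
          EM.GoodTerm.realize_mem φL K U (hc' (Sum.inl i)) w⟩ := by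
      intro w w2
      funext i
      apply Subtype.ext
      show (c'' (Sum.inl i)).realize _ = _
      rw [hinl, Term.realize_relabel]
      rfl
    have ebound : ∀ (w : γ' → ↥U) (w2 : δ → ↥U)
        (zz : ↥(Substructure.closure L (KStarSet K U)))
        (hzz : (zz : M) = g.realize (fun s => (w2 s : M))),
        (fun j => (⟨(c'' (Sum.inr j)).realize (fun s => ((Sum.elim w w2) s : M)),
          EM.GoodTerm.realize_mem φL K U (hc'' (Sum.inr j)) (Sum.elim w w2)⟩ :
            ↥(Substructure.closure L (KStarSet K U)))) =
        Fin.snoc (fun j => ⟨(c' (Sum.inr j)).realize (fun s => (w s : M)),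
          EM.GoodTerm.realize_mem φL K U (hc' (Sum.inr j)) w⟩) zz := by
      intro w w2 zz hzz
      funext j
      refine Fin.lastCases ?_ (fun j' => ?_) j
      · rw [Fin.snoc_last]
        apply Subtype.ext
        show (c'' (Sum.inr (Fin.last k))).realize _ = _
        rw [hlast, Term.realize_relabel, hzz]
        rfl
      · rw [Fin.snoc_castSucc]
        apply Subtype.ext
        show (c'' (Sum.inr j'.castSucc)).realize _ = _
        rw [hcast, Term.realize_relabel]
        rfl
    rw [efree u' q, efree v' p, ebound u' q zu rfl, ebound v' p z hz] at key
    exact key.mp (h zu)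

end Main

/-- Ehrenfeucht–Mostowski hypotheses: if `ā`, `b̄` are `n`-tuples from `U` that are atomically
equivalent in `⟨U, ≤⟩`, then they satisfy the same `L`-formulas in `Sg^M(K*U)`. -/
theorem stmt5 {L L' : FirstOrder.Language} (φL : L →ᴸ L') (M : Type*)
    [L.Structure M] [L'.Structure M] [φL.IsExpansionOn M]
    (U : Set M) [LinearOrder ↥U] [DenselyOrdered ↥U] [NoMinOrder ↥U] [NoMaxOrder ↥U]
    (hUne : U.Nonempty)
    (hUgen : Substructure.closure L' U = ⊤)
    (hInd : ∀ (n : ℕ) (ψ : L'.Formula (Fin n)) (a b : Fin n → ↥U),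
      StrictMono a → StrictMono b →
      (ψ.Realize (fun i => (a i : M)) ↔ ψ.Realize fun i => (b i : M)))
    (K : Set (Σ n, L'.Term (Fin n)))
    (n : ℕ) (a b : Fin n → ↥U)
    (hab : ∀ i j : Fin n, a i ≤ a j ↔ b i ≤ b j)
    (ψ : L.Formula (Fin n)) :
    Formula.Realize (M := ↥(Substructure.closure L (KStarSet K U))) ψ
        (fun i => ⟨(a i : M), Substructure.subset_closure (Set.mem_union_left _ (a i).2)⟩) ↔
      Formula.Realize (M := ↥(Substructure.closure L (KStarSet K U))) ψ
        (fun i => ⟨(b i : M), Substructure.subset_closure (Set.mem_union_left _ (b i).2)⟩) := by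
  have hc : ∀ i : Fin n ⊕ Fin 0, EM.GoodTerm φL K
      ((Sum.elim (fun i => Term.var i) (fun j : Fin 0 => j.elim0) i : L'.Term (Fin n))) := by
    rintro (i | j)
    · exact EM.GoodTerm.var i
    · exact j.elim0
  have hmain := EM.mainB φL K U hUne hInd (k := 0) ψ
    (Sum.elim (fun i => Term.var i) (fun j : Fin 0 => j.elim0)) hc a b hab
  have exy : ∀ (x x' : Fin n → ↥(Substructure.closure L (KStarSet K U)))
      (y y' : Fin 0 → ↥(Substructure.closure L (KStarSet K U))), x = x' →
      (BoundedFormula.Realize (M := ↥(Substructure.closure L (KStarSet K U))) ψ x y ↔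
        BoundedFormula.Realize (M := ↥(Substructure.closure L (KStarSet K U))) ψ x' y') := by
    rintro x x' y y' rfl
    apply iff_of_eq
    congr 1
    exact funext fun j => j.elim0
  exact (exy _ _ _ _ (funext fun i => Subtype.ext rfl)).trans
    (hmain.trans (exy _ _ _ _ (funext fun i => Subtype.ext rfl)))
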